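/- Let d ≥ 5. For a simple random walk X on ℤ^d started at the origin, the probability that X(i) ever hits the trace of an independent simple random walk X' started at the origin satisfies P(X(i) ∈ X'[0,∞)) ≤ C · i^{(2-d)/2} for some constant C depending only on d. -/

import Mathlib

open MeasureTheory ProbabilityTheory
open Real

/-- The uniform step distribution of the simple random walk on `ℤ^d`:
uniform on the `2d` unit vectors `±e_i`. -/
noncomputable def stepPMF (d : ℕ) (hd : 0 < d) : PMF (Fin d → ℤ) :=
  PMF.uniformOfFinset
    ((Finset.univ.image fun i : Fin d => (Pi.single i 1 : Fin d → ℤ)) ∪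
      (Finset.univ.image fun i : Fin d => (Pi.single i (-1) : Fin d → ℤ)))
    ⟨Pi.single ⟨0, hd⟩ 1,
      Finset.mem_union_left _ (Finset.mem_image.mpr ⟨⟨0, hd⟩, Finset.mem_univ _, rfl⟩)⟩

/-- `X` is a simple random walk on `ℤ^d` started at `x₀`, under the measure `μ`:
`X 0 = x₀` a.s., and the increments are i.i.d. uniform on the `2d` unit vectors. -/
def IsSRW {Ω : Type*} [MeasurableSpace Ω] (μ : Measure Ω) {d : ℕ} (hd : 0 < d)
    (X : ℕ → Ω → (Fin d → ℤ)) (x₀ : Fin d → ℤ) : Prop :=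
  (∀ n, Measurable (X n)) ∧
  (∀ᵐ ω ∂μ, X 0 ω = x₀) ∧
  iIndepFun (fun n ω => X (n + 1) ω - X n ω) μ ∧
  ∀ n, μ.map (fun ω => X (n + 1) ω - X n ω) = (stepPMF d hd).toMeasure

namespace SRWAux

variable {d : ℕ}

noncomputable def dotp (θ : Fin d → ℝ) (x : Fin d → ℤ) : ℝ := ∑ j, θ j * (x j : ℝ)

noncomputable def phi (d : ℕ) (θ : Fin d → ℝ) : ℝ := (∑ j, Real.cos (θ j)) / d

lemma dotp_add (θ : Fin d → ℝ) (x y : Fin d → ℤ) : dotp θ (x + y) = dotp θ x + dotp θ y := by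
  simp [dotp, mul_add, Finset.sum_add_distrib]

lemma dotp_zero (θ : Fin d → ℝ) : dotp θ 0 = 0 := by simp [dotp]

lemma dotp_single (θ : Fin d → ℝ) (j : Fin d) (c : ℤ) :
    dotp θ (Pi.single j c) = θ j * c := by
  rw [dotp, Finset.sum_eq_single j]
  · simp
  · intro m _ hm; simp [Pi.single_eq_of_ne hm]
  · simp

-- the step finset
def stepSet (d : ℕ) : Finset (Fin d → ℤ) :=
  ((Finset.univ.image fun i : Fin d => (Pi.single i 1 : Fin d → ℤ)) ∪
      (Finset.univ.image fun i : Fin d => (Pi.single i (-1) : Fin d → ℤ)))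

lemma single_injective (c : ℤ) (hc : c ≠ 0) :
    Function.Injective (fun i : Fin d => (Pi.single i c : Fin d → ℤ)) := by
  intro i j h
  by_contra hij
  have h2 := congrFun h i
  simp only [Pi.single_eq_same, Pi.single_eq_of_ne (fun hh => hij hh)] at h2
  exact hc h2

lemma disj : Disjoint (Finset.univ.image fun i : Fin d => (Pi.single i 1 : Fin d → ℤ))
    (Finset.univ.image fun i : Fin d => (Pi.single i (-1) : Fin d → ℤ)) := by
  rw [Finset.disjoint_left]
  rintro a ha hb
  obtain ⟨i, -, rfl⟩ := Finset.mem_image.mp ha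
  obtain ⟨j, -, hj⟩ := Finset.mem_image.mp hb
  have h2 := congrFun hj i
  simp only [Pi.single_eq_same] at h2
  by_cases hij : i = j
  · subst hij; simp only [Pi.single_eq_same] at h2; omega
  · simp only [Pi.single_eq_of_ne hij] at h2; omega

lemma stepSet_card : (stepSet d).card = 2 * d := by
  rw [stepSet, Finset.card_union_of_disjoint disj,
    Finset.card_image_of_injective _ (single_injective 1 one_ne_zero),
    Finset.card_image_of_injective _ (single_injective (-1) (by norm_num))]
  simp [two_mul]

lemma sum_stepSet (f : (Fin d → ℤ) → ℝ) :
    ∑ x ∈ stepSet d, f x = ∑ j, f (Pi.single j 1) + ∑ j, f (Pi.single j (-1)) := by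
  rw [stepSet, Finset.sum_union disj,
    Finset.sum_image (fun a _ b _ h => single_injective 1 one_ne_zero h),
    Finset.sum_image (fun a _ b _ h => single_injective (-1) (by norm_num) h)]

lemma integrable_of_bound {E : Type*} [MeasurableSpace E] [Countable E]
    [MeasurableSingletonClass E] (μ : Measure E) [IsProbabilityMeasure μ]
    (f : E → ℝ) (h : ∀ x, |f x| ≤ 1) : Integrable f μ :=
  Integrable.mono' (integrable_const 1) (measurable_of_countable f).aestronglyMeasurable
    (Filter.Eventually.of_forall fun x => by simpa using h x)

lemma step_integral (hd : 0 < d) (f : ℝ → ℝ) (hf : ∀ x, |f x| ≤ 1) (θ : Fin d → ℝ) :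
    ∫ x, f (dotp θ x) ∂(stepPMF d hd).toMeasure
      = (∑ j, (f (θ j) + f (-θ j))) / (2 * d) := by
  rw [integral_countable' (integrable_of_bound _ _ (fun x => hf _))]
  simp only [measureReal_def]
  have hsupp : ∀ x ∉ stepSet d,
      (((stepPMF d hd).toMeasure {x}).toReal • f (dotp θ x)) = 0 := by
    intro x hx
    rw [PMF.toMeasure_apply_singleton _ _ (measurableSet_singleton x)]
    rw [show (stepPMF d hd) x = _ from PMF.uniformOfFinset_apply _ _]
    rw [if_neg (by rwa [stepSet] at hx)]
    simp
  rw [tsum_eq_sum hsupp]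
  have hval : ∀ x ∈ stepSet d,
      (((stepPMF d hd).toMeasure {x}).toReal • f (dotp θ x)) = f (dotp θ x) / (2 * d) := by
    intro x hx
    rw [PMF.toMeasure_apply_singleton _ _ (measurableSet_singleton x)]
    rw [show (stepPMF d hd) x = _ from PMF.uniformOfFinset_apply _ _]
    rw [if_pos (by rwa [stepSet] at hx), ← stepSet, stepSet_card]
    push_cast
    rw [ENNReal.toReal_inv]
    simp [div_eq_inv_mul]
  rw [Finset.sum_congr rfl hval, ← Finset.sum_div]
  congr 1
  rw [sum_stepSet (fun x => f (dotp θ x)), ← Finset.sum_add_distrib]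
  congr 1; ext j
  rw [dotp_single, dotp_single]
  push_cast
  ring_nf

lemma step_integral_cos (hd : 0 < d) (θ : Fin d → ℝ) :
    ∫ x, Real.cos (dotp θ x) ∂(stepPMF d hd).toMeasure = phi d θ := by
  rw [step_integral hd _ (fun x => abs_cos_le_one x) θ, phi]
  simp only [Real.cos_neg]
  have h2 : (∑ j, (Real.cos (θ j) + Real.cos (θ j))) = 2 * ∑ j, Real.cos (θ j) := by
    rw [Finset.sum_add_distrib]; ring
  rw [h2, mul_div_mul_left _ _ (two_ne_zero)]

lemma step_integral_sin (hd : 0 < d) (θ : Fin d → ℝ) :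
    ∫ x, Real.sin (dotp θ x) ∂(stepPMF d hd).toMeasure = 0 := by
  rw [step_integral hd _ (fun x => abs_sin_le_one x) θ]
  simp


end SRWAux

namespace SRWAux2
open SRWAux

variable {d : ℕ}

lemma dotp_sub (θ : Fin d → ℝ) (x y : Fin d → ℤ) : dotp θ (x - y) = dotp θ x - dotp θ y := by
  simp [dotp, sub_mul, mul_sub, Finset.sum_sub_distrib]

section Walk

variable {Ω : Type} [MeasurableSpace Ω] {μ : Measure Ω} [IsProbabilityMeasure μ]
  {X X' : ℕ → Ω → (Fin d → ℤ)}

lemma integrable_bdd {f : Ω → ℝ} (hf : AEStronglyMeasurable f μ) (h : ∀ ω, |f ω| ≤ 1) :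
    Integrable f μ :=
  Integrable.mono' (integrable_const 1) hf (Filter.Eventually.of_forall fun x => by simpa using h x)

lemma meas_incr (hm : ∀ n, Measurable (X n)) (k : ℕ) :
    Measurable (fun ω => X (k+1) ω - X k ω) :=
  (measurable_of_countable (fun p : (Fin d → ℤ) × (Fin d → ℤ) => p.1 - p.2)).comp
    ((hm (k+1)).prodMk (hm k))

lemma indep_walk_incr (hd : 0 < d) (hX : IsSRW μ hd X 0) (n : ℕ) :
    IndepFun (X n) (fun ω => X (n+1) ω - X n ω) μ := by
  obtain ⟨hm, h0, hind, _⟩ := hX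
  have h1 : IndepFun (∑ j ∈ Finset.range n, fun ω => X (j+1) ω - X j ω)
      (fun ω => X (n+1) ω - X n ω) μ :=
    hind.indepFun_sum_range_succ (meas_incr hm) n
  refine h1.congr ?_ (Filter.EventuallyEq.refl _ _)
  filter_upwards [h0] with ω h0ω
  have h2 : (∑ j ∈ Finset.range n, fun ω => X (j+1) ω - X j ω) ω
      = ∑ j ∈ Finset.range n, (X (j+1) ω - X j ω) := by
    simp [Finset.sum_apply]
  rw [h2, Finset.sum_range_sub (fun k => X k ω), h0ω, sub_zero]

lemma charFun_walk (hd : 0 < d) (hX : IsSRW μ hd X 0) (θ : Fin d → ℝ) : ∀ n,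
    (∫ ω, Real.cos (dotp θ (X n ω)) ∂μ = phi d θ ^ n) ∧
    (∫ ω, Real.sin (dotp θ (X n ω)) ∂μ = 0) := by
  obtain ⟨hm, h0, hind, hmap⟩ := hX
  have hgm : ∀ (g : (Fin d → ℤ) → ℝ) (n : ℕ), AEStronglyMeasurable (fun ω => g (X n ω)) μ :=
    fun g n => ((measurable_of_countable g).comp (hm n)).aestronglyMeasurable
  have hgmi : ∀ (g : (Fin d → ℤ) → ℝ) (n : ℕ), AEStronglyMeasurable (fun ω => g (X (n+1) ω - X n ω)) μ :=
    fun g n => ((measurable_of_countable g).comp (meas_incr hm n)).aestronglyMeasurable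
  intro n
  induction n with
  | zero =>
    constructor
    · rw [integral_congr_ae (g := fun _ => (1:ℝ))
        (by filter_upwards [h0] with ω h; simp only [h, dotp_zero, Real.cos_zero])]
      simp
    · rw [integral_congr_ae (g := fun _ => (0:ℝ))
        (by filter_upwards [h0] with ω h; simp only [h, dotp_zero, Real.sin_zero])]
      simp
  | succ n ih =>
    have hXeq : ∀ ω, dotp θ (X (n+1) ω) = dotp θ (X n ω) + dotp θ (X (n+1) ω - X n ω) := by
      intro ω; rw [← dotp_add]; congr 1; abel
    have hInd := indep_walk_incr hd ⟨hm, h0, hind, hmap⟩ n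
    have hint : ∀ (g h : ℝ → ℝ), (∀ x, |g x| ≤ 1) → (∀ x, |h x| ≤ 1) →
        ∫ ω, g (dotp θ (X n ω)) * h (dotp θ (X (n+1) ω - X n ω)) ∂μ
          = (∫ ω, g (dotp θ (X n ω)) ∂μ) * ∫ ω, h (dotp θ (X (n+1) ω - X n ω)) ∂μ := by
      intro g h hg hh
      have m1 : Integrable ((fun x => g (dotp θ x)) ∘ (X n)) μ := by
        simpa [Function.comp_def] using integrable_bdd (hgm (fun x => g (dotp θ x)) n) (fun ω => hg _)
      have m2 : Integrable ((fun x => h (dotp θ x)) ∘ (fun ω => X (n+1) ω - X n ω)) μ := by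
        simpa [Function.comp_def] using integrable_bdd (hgmi (fun x => h (dotp θ x)) n) (fun ω => hh _)
      have H := (hInd.comp (measurable_of_countable (fun x => g (dotp θ x)))
        (measurable_of_countable (fun x => h (dotp θ x)))).integral_mul_eq_mul_integral m1.aestronglyMeasurable m2.aestronglyMeasurable
      simpa [Function.comp_def] using H
    have hstep : ∀ (h : ℝ → ℝ), (∀ x, |h x| ≤ 1) →
        ∫ ω, h (dotp θ (X (n+1) ω - X n ω)) ∂μ = ∫ x, h (dotp θ x) ∂(stepPMF d hd).toMeasure := by
      intro h hh
      rw [← hmap n]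
      exact (integral_map (meas_incr hm n).aemeasurable
        (measurable_of_countable (fun x => h (dotp θ x))).aestronglyMeasurable).symm
    constructor
    · have e1 : ∫ ω, Real.cos (dotp θ (X (n+1) ω)) ∂μ
          = ∫ ω, (Real.cos (dotp θ (X n ω)) * Real.cos (dotp θ (X (n+1) ω - X n ω))
              - Real.sin (dotp θ (X n ω)) * Real.sin (dotp θ (X (n+1) ω - X n ω))) ∂μ := by
        congr 1; ext ω; rw [hXeq ω, Real.cos_add]
      rw [e1, integral_sub
          (integrable_bdd (by
            exact (((measurable_of_countable (fun x => Real.cos (dotp θ x))).comp (hm n)).mul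
              ((measurable_of_countable (fun x => Real.cos (dotp θ x))).comp (meas_incr hm n))).aestronglyMeasurable)
            (fun ω => by rw [abs_mul]; exact mul_le_one₀ (abs_cos_le_one _) (abs_nonneg _) (abs_cos_le_one _)))
          (integrable_bdd (by
            exact (((measurable_of_countable (fun x => Real.sin (dotp θ x))).comp (hm n)).mul
              ((measurable_of_countable (fun x => Real.sin (dotp θ x))).comp (meas_incr hm n))).aestronglyMeasurable)
            (fun ω => by rw [abs_mul]; exact mul_le_one₀ (abs_sin_le_one _) (abs_nonneg _) (abs_sin_le_one _))),
        hint _ _ abs_cos_le_one abs_cos_le_one,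
        hint _ _ abs_sin_le_one abs_sin_le_one]
      rw [hstep _ abs_cos_le_one, hstep _ abs_sin_le_one, step_integral_cos hd θ,
        step_integral_sin hd θ, ih.1, ih.2]
      ring
    · have e1 : ∫ ω, Real.sin (dotp θ (X (n+1) ω)) ∂μ
          = ∫ ω, (Real.sin (dotp θ (X n ω)) * Real.cos (dotp θ (X (n+1) ω - X n ω))
              + Real.cos (dotp θ (X n ω)) * Real.sin (dotp θ (X (n+1) ω - X n ω))) ∂μ := by
        congr 1; ext ω; rw [hXeq ω, Real.sin_add]
      rw [e1, integral_add
          (integrable_bdd (by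
            exact (((measurable_of_countable (fun x => Real.sin (dotp θ x))).comp (hm n)).mul
              ((measurable_of_countable (fun x => Real.cos (dotp θ x))).comp (meas_incr hm n))).aestronglyMeasurable)
            (fun ω => by rw [abs_mul]; exact mul_le_one₀ (abs_sin_le_one _) (abs_nonneg _) (abs_cos_le_one _)))
          (integrable_bdd (by
            exact (((measurable_of_countable (fun x => Real.cos (dotp θ x))).comp (hm n)).mul
              ((measurable_of_countable (fun x => Real.sin (dotp θ x))).comp (meas_incr hm n))).aestronglyMeasurable)
            (fun ω => by rw [abs_mul]; exact mul_le_one₀ (abs_cos_le_one _) (abs_nonneg _) (abs_sin_le_one _))),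
        hint _ _ abs_sin_le_one abs_cos_le_one,
        hint _ _ abs_cos_le_one abs_sin_le_one]
      rw [hstep _ abs_sin_le_one, step_integral_sin hd θ, ih.2]
      ring

lemma charFun_pair (hd : 0 < d) (hX : IsSRW μ hd X 0) (hX' : IsSRW μ hd X' 0)
    (hindep : IndepFun (fun ω n => X n ω) (fun ω n => X' n ω) μ) (t i : ℕ) (θ : Fin d → ℝ) :
    ∫ ω, Real.cos (dotp θ (X' t ω - X i ω)) ∂μ = phi d θ ^ (t + i) := by
  have hpair : IndepFun (fun ω => X' t ω) (fun ω => X i ω) μ :=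
    (hindep.symm.comp (measurable_pi_apply t) (measurable_pi_apply i))
  have hint : ∀ (g h : ℝ → ℝ), (∀ x, |g x| ≤ 1) → (∀ x, |h x| ≤ 1) →
      ∫ ω, g (dotp θ (X' t ω)) * h (dotp θ (X i ω)) ∂μ
        = (∫ ω, g (dotp θ (X' t ω)) ∂μ) * ∫ ω, h (dotp θ (X i ω)) ∂μ := by
    intro g h hg hh
    have m1 : Integrable ((fun x => g (dotp θ x)) ∘ (fun ω => X' t ω)) μ := by
      simpa [Function.comp_def] using integrable_bdd
        ((measurable_of_countable (fun x => g (dotp θ x))).comp (hX'.1 t)).aestronglyMeasurable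
        (fun ω : Ω => hg (dotp θ (X' t ω)))
    have m2 : Integrable ((fun x => h (dotp θ x)) ∘ (fun ω => X i ω)) μ := by
      simpa [Function.comp_def] using integrable_bdd
        ((measurable_of_countable (fun x => h (dotp θ x))).comp (hX.1 i)).aestronglyMeasurable
        (fun ω : Ω => hh (dotp θ (X i ω)))
    have H := (hpair.comp (measurable_of_countable (fun x => g (dotp θ x)))
      (measurable_of_countable (fun x => h (dotp θ x)))).integral_mul_eq_mul_integral m1.aestronglyMeasurable m2.aestronglyMeasurable
    simpa [Function.comp_def] using H
  have e1 : ∫ ω, Real.cos (dotp θ (X' t ω - X i ω)) ∂μ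
      = ∫ ω, (Real.cos (dotp θ (X' t ω)) * Real.cos (dotp θ (X i ω))
          + Real.sin (dotp θ (X' t ω)) * Real.sin (dotp θ (X i ω))) ∂μ := by
    congr 1; ext ω; rw [dotp_sub, Real.cos_sub]
  rw [e1, integral_add
      (integrable_bdd (by
        exact (((measurable_of_countable (fun x => Real.cos (dotp θ x))).comp (hX'.1 t)).mul
          ((measurable_of_countable (fun x => Real.cos (dotp θ x))).comp (hX.1 i))).aestronglyMeasurable)
        (fun ω => by rw [abs_mul]; exact mul_le_one₀ (abs_cos_le_one _) (abs_nonneg _) (abs_cos_le_one _)))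
      (integrable_bdd (by
        exact (((measurable_of_countable (fun x => Real.sin (dotp θ x))).comp (hX'.1 t)).mul
          ((measurable_of_countable (fun x => Real.sin (dotp θ x))).comp (hX.1 i))).aestronglyMeasurable)
        (fun ω => by rw [abs_mul]; exact mul_le_one₀ (abs_sin_le_one _) (abs_nonneg _) (abs_sin_le_one _))),
    hint _ _ abs_cos_le_one abs_cos_le_one, hint _ _ abs_sin_le_one abs_sin_le_one,
    (charFun_walk hd hX θ i).1, (charFun_walk hd hX θ i).2,
    (charFun_walk hd hX' θ t).1, (charFun_walk hd hX' θ t).2, pow_add]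
  ring

end Walk

end SRWAux2

namespace SRWAux
noncomputable section Inversion

/-- indicator of `Ioc (-π) π` -/
noncomputable def indr : ℝ → ℝ := (Set.Ioc (-π) π).indicator 1

lemma indr_nonneg (t : ℝ) : 0 ≤ indr t := Set.indicator_nonneg (fun _ _ => zero_le_one) t

lemma indr_le_one (t : ℝ) : indr t ≤ 1 := by
  by_cases h : t ∈ Set.Ioc (-π) π
  · simp [indr, Set.indicator_of_mem h]
  · simp [indr, Set.indicator_of_notMem h]

lemma indr_measurable : Measurable indr :=
  (measurable_const.indicator measurableSet_Ioc)

lemma indr_mul_eq_indicator (f : ℝ → ℝ) (t : ℝ) :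
    indr t * f t = (Set.Ioc (-π) π).indicator f t := by
  by_cases h : t ∈ Set.Ioc (-π) π
  · simp [indr, Set.indicator_of_mem h]
  · simp [indr, Set.indicator_of_notMem h]

lemma indr_integrable : Integrable indr := by
  rw [indr, integrable_indicator_iff measurableSet_Ioc]
  exact continuous_const.integrableOn_Ioc

lemma oneD_cos (m : ℤ) :
    ∫ t : ℝ, indr t * Real.cos (m * t) = if m = 0 then 2 * π else 0 := by
  have h1 : (fun t => indr t * Real.cos (m * t))
      = (Set.Ioc (-π) π).indicator (fun t => Real.cos (m * t)) := by
    ext t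
    by_cases h : t ∈ Set.Ioc (-π) π
    · simp [indr, Set.indicator_of_mem h]
    · simp [indr, Set.indicator_of_notMem h]
  rw [h1, integral_indicator measurableSet_Ioc,
    ← intervalIntegral.integral_of_le (by linarith [pi_pos] : -π ≤ π)]
  by_cases hm : m = 0
  · subst hm
    simp [intervalIntegral.integral_const]
    ring
  · rw [if_neg hm]
    have hc : (m:ℝ) ≠ 0 := Int.cast_ne_zero.mpr hm
    have := intervalIntegral.integral_comp_mul_left (a := -π) (b := π) (fun x => Real.cos x) hc
    simp only [smul_eq_mul] at this
    rw [this, integral_cos, Real.sin_int_mul_pi m, mul_neg, Real.sin_neg,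
      Real.sin_int_mul_pi m]
    simp

lemma oneD_sin (m : ℤ) :
    ∫ t : ℝ, indr t * Real.sin (m * t) = 0 := by
  have h1 : (fun t => indr t * Real.sin (m * t))
      = (Set.Ioc (-π) π).indicator (fun t => Real.sin (m * t)) := by
    ext t
    by_cases h : t ∈ Set.Ioc (-π) π
    · simp [indr, Set.indicator_of_mem h]
    · simp [indr, Set.indicator_of_notMem h]
  rw [h1, integral_indicator measurableSet_Ioc,
    ← intervalIntegral.integral_of_le (by linarith [pi_pos] : -π ≤ π)]
  by_cases hm : m = 0
  · subst hm; simp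
  · have hc : (m:ℝ) ≠ 0 := Int.cast_ne_zero.mpr hm
    have := intervalIntegral.integral_comp_mul_left (a := -π) (b := π) (fun x => Real.sin x) hc
    simp only [smul_eq_mul] at this
    rw [this, integral_sin, mul_neg, Real.cos_neg]
    simp

/-- 1D complex factor -/
noncomputable def cF (m : ℤ) (t : ℝ) : ℂ := (indr t : ℝ) * Complex.exp (Complex.I * (m * t))

lemma cF_integrable (m : ℤ) : Integrable (cF m) := by
  have h1 : cF m = (Set.Ioc (-π) π).indicator (fun t => Complex.exp (Complex.I * (m * t))) := by
    ext t
    by_cases h : t ∈ Set.Ioc (-π) π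
    · simp [cF, indr, Set.indicator_of_mem h]
    · simp [cF, indr, Set.indicator_of_notMem h]
  rw [h1, integrable_indicator_iff measurableSet_Ioc]
  exact (Continuous.integrableOn_Ioc (by continuity))

lemma cF_eq (m : ℤ) (t : ℝ) :
    cF m t = ((indr t * Real.cos (m * t) : ℝ) : ℂ)
      + ((indr t * Real.sin (m * t) : ℝ) : ℂ) * Complex.I := by
  rw [cF, mul_comm Complex.I ((m:ℂ) * t), Complex.exp_mul_I]
  have he : ((m:ℂ) * (t:ℂ)) = (((m:ℝ) * t : ℝ) : ℂ) := by push_cast; ring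
  rw [he, ← Complex.ofReal_cos, ← Complex.ofReal_sin]
  push_cast
  ring

lemma cF_integral (m : ℤ) :
    ∫ t : ℝ, cF m t = if m = 0 then ((2 * π : ℝ) : ℂ) else 0 := by
  have h1 : ∀ t, cF m t = ((indr t * Real.cos (m * t) : ℝ) : ℂ)
      + (indr t * Real.sin (m * t) : ℝ) • Complex.I := fun t => by
    rw [cF_eq m t]; norm_num [Complex.real_smul]
  rw [integral_congr_ae (Filter.Eventually.of_forall h1)]
  have i1 : Integrable (fun t => ((indr t * Real.cos (m * t) : ℝ) : ℂ)) := by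
    refine Integrable.mono' indr_integrable ?_ ?_
    · exact (Complex.measurable_ofReal.comp
        ((indr_measurable.mul ((Real.continuous_cos.measurable).comp
          (measurable_const_mul (m:ℝ))))) ).aestronglyMeasurable
    · refine Filter.Eventually.of_forall fun t => ?_
      simp only [Complex.norm_real, norm_mul, Real.norm_eq_abs]
      rw [abs_of_nonneg (indr_nonneg t)]
      calc indr t * |Real.cos (m * t)| ≤ indr t * 1 :=
            mul_le_mul_of_nonneg_left (abs_cos_le_one _) (indr_nonneg t)
        _ = indr t := mul_one _
  have i2 : Integrable (fun t => (indr t * Real.sin (m * t) : ℝ) • Complex.I) := by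
    refine Integrable.mono' indr_integrable ?_ ?_
    · exact ((Complex.measurable_ofReal.comp
        ((indr_measurable.mul ((Real.continuous_sin.measurable).comp
          (measurable_const_mul (m:ℝ)))))).smul_const Complex.I).aestronglyMeasurable
    · refine Filter.Eventually.of_forall fun t => ?_
      rw [norm_smul]
      simp only [Complex.norm_I, mul_one, Real.norm_eq_abs, abs_mul]
      rw [abs_of_nonneg (indr_nonneg t)]
      calc indr t * |Real.sin (m * t)| ≤ indr t * 1 :=
            mul_le_mul_of_nonneg_left (abs_sin_le_one _) (indr_nonneg t)
        _ = indr t := mul_one _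
  have hA : ∫ t, ((indr t * Real.cos (m * t) : ℝ) : ℂ)
      = ((∫ t, indr t * Real.cos (m * t) : ℝ) : ℂ) := integral_ofReal (𝕜 := ℂ)
  have hB : ∫ t, ((indr t * Real.sin (m * t) : ℝ) : ℂ)
      = ((∫ t, indr t * Real.sin (m * t) : ℝ) : ℂ) := integral_ofReal (𝕜 := ℂ)
  rw [integral_add i1 i2, integral_smul_const, hA, oneD_cos m, oneD_sin m]
  by_cases hm : m = 0 <;> simp [hm]

end Inversion
end SRWAux

namespace SRWAux
noncomputable section InversionD
variable {d : ℕ}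

lemma prod_cF_eq (k : Fin d → ℤ) (θ : Fin d → ℝ) :
    ∏ j, cF (k j) (θ j)
      = ((∏ j, indr (θ j) : ℝ) : ℂ) * Complex.exp (Complex.I * ((dotp θ k : ℝ) : ℂ)) := by
  simp only [cF]
  rw [Finset.prod_mul_distrib, ← Complex.ofReal_prod, ← Complex.exp_sum]
  congr 1
  congr 1
  rw [dotp]
  push_cast
  rw [Finset.mul_sum]
  exact Finset.sum_congr rfl fun x _ => by ring

lemma re_aux (r c s : ℝ) : ((r:ℂ) * ((c:ℂ) + (s:ℂ) * Complex.I)).re = r * c := by simp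

lemma re_prod_cF (k : Fin d → ℤ) (θ : Fin d → ℝ) :
    (∏ j, cF (k j) (θ j)).re = (∏ j, indr (θ j)) * Real.cos (dotp θ k) := by
  rw [prod_cF_eq, mul_comm Complex.I _, Complex.exp_mul_I]
  rw [← Complex.ofReal_cos, ← Complex.ofReal_sin, re_aux]

lemma box_cos (k : Fin d → ℤ) :
    ∫ θ : Fin d → ℝ, (∏ j, indr (θ j)) * Real.cos (dotp θ k)
      = if k = 0 then (2 * π) ^ d else 0 := by
  have hint : Integrable (fun θ : Fin d → ℝ => ∏ j, cF (k j) (θ j)) :=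
    Integrable.fintype_prod (𝕜 := ℂ) fun j => cF_integrable (k j)
  have h1 : ∫ θ : Fin d → ℝ, (∏ j, indr (θ j)) * Real.cos (dotp θ k)
      = (∫ θ : Fin d → ℝ, ∏ j, cF (k j) (θ j)).re := by
    have h1' : ∫ θ : Fin d → ℝ, (∏ j, cF (k j) (θ j)).re
        = (∫ θ : Fin d → ℝ, ∏ j, cF (k j) (θ j)).re := by
      simpa [RCLike.re_to_complex] using integral_re hint
    rw [← h1']
    exact integral_congr_ae (Filter.Eventually.of_forall fun θ => (re_prod_cF k θ).symm)
  rw [h1, integral_fintype_prod_volume_eq_prod (ι := Fin d) (f := fun j => cF (k j))]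
  have h2 : ∀ j, ∫ t : ℝ, cF (k j) t = if k j = 0 then ((2 * π : ℝ) : ℂ) else 0 :=
    fun j => cF_integral (k j)
  rw [Finset.prod_congr rfl (fun j _ => h2 j)]
  by_cases hk : k = 0
  · subst hk
    rw [if_pos rfl]
    have hz : ∀ j : Fin d, (if (0 : Fin d → ℤ) j = 0 then ((2 * π : ℝ) : ℂ) else 0)
        = ((2 * π : ℝ) : ℂ) := fun j => if_pos rfl
    rw [Finset.prod_congr rfl (fun j _ => hz j), Finset.prod_const, Finset.card_univ,
      Fintype.card_fin, ← Complex.ofReal_pow, Complex.ofReal_re]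
  · obtain ⟨j, hj⟩ : ∃ j, k j ≠ 0 := by
      by_contra h
      push_neg at h
      exact hk (funext h)
    have hz : (∏ j, (if k j = 0 then ((2 * π : ℝ) : ℂ) else 0)) = 0 :=
      Finset.prod_eq_zero (Finset.mem_univ j) (if_neg hj)
    rw [hz, if_neg hk]
    simp

lemma measurable_prod_indr : Measurable (fun θ : Fin d → ℝ => ∏ j, indr (θ j)) :=
  Finset.measurable_prod _ fun j _ => indr_measurable.comp (measurable_pi_apply j)

lemma prod_indr_nonneg (θ : Fin d → ℝ) : 0 ≤ ∏ j, indr (θ j) :=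
  Finset.prod_nonneg fun j _ => indr_nonneg _

lemma integrable_prod_indr : Integrable (fun θ : Fin d → ℝ => ∏ j, indr (θ j)) :=
  Integrable.fintype_prod (𝕜 := ℝ) (f := fun _ => indr) fun _ => indr_integrable

lemma inversion {Ω : Type} [MeasurableSpace Ω] (μ : Measure Ω) [IsProbabilityMeasure μ]
    {Y : Ω → (Fin d → ℤ)} (hY : Measurable Y) :
    ∫ θ : Fin d → ℝ, (∏ j, indr (θ j)) * ∫ ω, Real.cos (dotp θ (Y ω)) ∂μ
      = (2 * π) ^ d * (μ {ω | Y ω = 0}).toReal := by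
  set F : (Fin d → ℝ) → Ω → ℝ :=
    fun θ ω => (∏ j, indr (θ j)) * Real.cos (dotp θ (Y ω)) with hF
  have hFm : Measurable (Function.uncurry F) := by
    apply Measurable.mul
    · exact measurable_prod_indr.comp measurable_fst
    · refine Real.continuous_cos.measurable.comp ?_
      rw [show (fun p : (Fin d → ℝ) × Ω => dotp p.1 (Y p.2))
        = fun p : (Fin d → ℝ) × Ω => ∑ j, p.1 j * ((Y p.2 j : ℤ) : ℝ) from rfl]
      refine Finset.measurable_sum _ fun j _ => Measurable.mul ?_ ?_
      · exact (measurable_pi_apply j).comp measurable_fst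
      · exact (measurable_of_countable (fun x : Fin d → ℤ => ((x j : ℤ) : ℝ))).comp
          (hY.comp measurable_snd)
  have hFbound : ∀ θ ω, ‖F θ ω‖ ≤ ∏ j, indr (θ j) := by
    intro θ ω
    rw [hF]
    simp only [Real.norm_eq_abs, abs_mul, abs_of_nonneg (prod_indr_nonneg θ)]
    calc (∏ j, indr (θ j)) * |Real.cos (dotp θ (Y ω))| ≤ (∏ j, indr (θ j)) * 1 :=
          mul_le_mul_of_nonneg_left (abs_cos_le_one _) (prod_indr_nonneg θ)
      _ = _ := mul_one _
  have hFsec : ∀ θ, Integrable (fun ω => F θ ω) μ := by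
    intro θ
    refine Integrable.mono' (integrable_const (∏ j, indr (θ j))) ?_
      (Filter.Eventually.of_forall fun ω => hFbound θ ω)
    exact (hFm.comp (measurable_prodMk_left (m := inferInstance))).aestronglyMeasurable
  have hFint : Integrable (Function.uncurry F) ((volume : Measure (Fin d → ℝ)).prod μ) := by
    rw [integrable_prod_iff hFm.aestronglyMeasurable]
    constructor
    · exact Filter.Eventually.of_forall hFsec
    · refine Integrable.mono' integrable_prod_indr
        (hFm.norm.aestronglyMeasurable.integral_prod_right') ?_
      refine Filter.Eventually.of_forall fun θ => ?_
      have h1 : ∫ ω, ‖F θ ω‖ ∂μ ≤ ∫ _ω, (∏ j, indr (θ j)) ∂μ :=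
        integral_mono (hFsec θ).norm (integrable_const _) (fun ω => hFbound θ ω)
      rw [integral_const] at h1
      simp only [measureReal_def, measure_univ, ENNReal.toReal_one, smul_eq_mul, one_mul] at h1
      rw [Real.norm_eq_abs, abs_of_nonneg (integral_nonneg (fun ω => norm_nonneg _))]
      exact h1
  have hstep1 : ∫ θ : Fin d → ℝ, (∏ j, indr (θ j)) * ∫ ω, Real.cos (dotp θ (Y ω)) ∂μ
      = ∫ θ : Fin d → ℝ, ∫ ω, F θ ω ∂μ := by
    refine integral_congr_ae (Filter.Eventually.of_forall fun θ => ?_)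
    rw [hF]
    exact (integral_const_mul _ _).symm
  rw [hstep1, integral_integral_swap hFint]
  have hstep2 : ∀ ω, ∫ θ : Fin d → ℝ, F θ ω
      = {ω' | Y ω' = 0}.indicator (fun _ => (2 * π) ^ d) ω := by
    intro ω
    rw [hF]
    have := box_cos (d := d) (Y ω)
    rw [this]
    by_cases h : Y ω = 0
    · rw [if_pos h, Set.indicator_of_mem (by exact h)]
    · rw [if_neg h, Set.indicator_of_notMem (by exact h)]
  have hms : MeasurableSet {ω' | Y ω' = 0} := hY (measurableSet_singleton 0)
  rw [integral_congr_ae (Filter.Eventually.of_forall hstep2),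
    integral_indicator_const _ hms, smul_eq_mul, mul_comm]
  rfl

end InversionD
end SRWAux

namespace SRWAux
noncomputable section Bound
variable {d : ℕ}

lemma one_sub_cos_ge {u : ℝ} (h0 : 0 ≤ u) (h2 : u ≤ π / 2) :
    2 / π ^ 2 * u ^ 2 ≤ 1 - Real.cos u := by
  have hπ : 0 < π := Real.pi_pos
  have hs : 2 / π * (u / 2) ≤ Real.sin (u / 2) :=
    Real.mul_le_sin (by positivity) (by linarith)
  have hc : 1 - Real.cos u = 2 * Real.sin (u / 2) ^ 2 := by
    have h := Real.cos_two_mul (u / 2)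
    rw [show 2 * (u / 2) = u by ring] at h
    have h2' := Real.sin_sq_add_cos_sq (u / 2)
    linarith
  have hsq : (2 / π * (u / 2)) ^ 2 ≤ Real.sin (u / 2) ^ 2 :=
    pow_le_pow_left₀ (by positivity) hs 2
  have he : (2 / π * (u / 2)) ^ 2 = 1 / π ^ 2 * u ^ 2 := by field_simp
  have h6 : 2 / π ^ 2 * u ^ 2 = 2 * (1 / π ^ 2 * u ^ 2) := by ring
  rw [hc, h6]
  rw [he] at hsq
  linarith

lemma exists_center {t : ℝ} (ht : t ∈ Set.Ioc (-π) π) :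
    ∃ u, (u = t ∨ u = t - π ∨ u = t + π) ∧ 2 / π ^ 2 * u ^ 2 ≤ 1 - |Real.cos t| := by
  obtain ⟨h1, h2⟩ := ht
  have hπ : 0 < π := Real.pi_pos
  rcases le_or_gt t (-(π/2)) with hA | hA
  · refine ⟨t + π, Or.inr (Or.inr rfl), ?_⟩
    have hu0 : 0 ≤ t + π := by linarith
    have hu2 : t + π ≤ π / 2 := by linarith
    have h3 : Real.cos (t + π) = -Real.cos t := by
      rw [Real.cos_add, Real.cos_pi, Real.sin_pi]; ring
    have h4 : 0 ≤ Real.cos (t + π) :=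
      Real.cos_nonneg_of_mem_Icc ⟨by linarith, hu2⟩
    have hcos : |Real.cos t| = Real.cos (t + π) := by
      rw [abs_of_nonpos (by linarith), h3]
    rw [hcos]
    exact one_sub_cos_ge hu0 hu2
  · rcases le_or_gt t (π/2) with hB | hB
    · refine ⟨t, Or.inl rfl, ?_⟩
      have habs : |t| ≤ π / 2 := abs_le.mpr ⟨by linarith, hB⟩
      have hcos : |Real.cos t| = Real.cos t :=
        abs_of_nonneg (Real.cos_nonneg_of_mem_Icc ⟨by linarith, hB⟩)
      have h5 := one_sub_cos_ge (abs_nonneg t) habs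
      rw [Real.cos_abs, sq_abs] at h5
      rw [hcos]
      exact h5
    · refine ⟨t - π, Or.inr (Or.inl rfl), ?_⟩
      have habs : |t - π| ≤ π / 2 := abs_le.mpr ⟨by linarith, by linarith⟩
      have h3 : Real.cos (t - π) = -Real.cos t := by
        rw [Real.cos_sub, Real.cos_pi, Real.sin_pi]; ring
      have h4 : 0 ≤ Real.cos (t - π) := by
        rw [← Real.cos_abs]
        exact Real.cos_nonneg_of_mem_Icc ⟨by linarith [abs_nonneg (t - π)], habs⟩
      have h6 : Real.cos t ≤ 0 := by rw [h3] at h4; linarith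
      have hcos : |Real.cos t| = Real.cos (t - π) := by
        rw [abs_of_nonpos h6, h3]
      have h5 := one_sub_cos_ge (abs_nonneg (t - π)) habs
      rw [Real.cos_abs, sq_abs] at h5
      rw [hcos]
      exact h5

lemma abs_phi_le (hd : 0 < d) (θ : Fin d → ℝ) :
    |phi d θ| ≤ ∏ j, Real.exp (-(1 - |Real.cos (θ j)|) / d) := by
  have hd' : (0:ℝ) < d := by exact_mod_cast hd
  have h1 : |phi d θ| ≤ (∑ j, |Real.cos (θ j)|) / d := by
    rw [phi, abs_div, abs_of_nonneg hd'.le]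
    gcongr
    exact Finset.abs_sum_le_sum_abs _ _
  have h2 : (∑ j, |Real.cos (θ j)|) / d = 1 - (∑ j, (1 - |Real.cos (θ j)|)) / d := by
    rw [Finset.sum_sub_distrib, Finset.sum_const, Finset.card_univ, Fintype.card_fin,
      nsmul_eq_mul, mul_one]
    field_simp
    ring
  have h3 : 1 - (∑ j, (1 - |Real.cos (θ j)|)) / d
      ≤ Real.exp (-((∑ j, (1 - |Real.cos (θ j)|)) / d)) := by
    have := Real.add_one_le_exp (-((∑ j, (1 - |Real.cos (θ j)|)) / d))
    linarith
  have h4 : Real.exp (-((∑ j, (1 - |Real.cos (θ j)|)) / d))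
      = ∏ j, Real.exp (-(1 - |Real.cos (θ j)|) / d) := by
    rw [← Real.exp_sum]
    congr 1
    rw [← Finset.sum_div, ← neg_div]
    congr 1
    exact (Finset.sum_neg_distrib _).symm
  calc |phi d θ| ≤ (∑ j, |Real.cos (θ j)|) / d := h1
    _ = 1 - (∑ j, (1 - |Real.cos (θ j)|)) / d := h2
    _ ≤ Real.exp (-((∑ j, (1 - |Real.cos (θ j)|)) / d)) := h3
    _ = ∏ j, Real.exp (-(1 - |Real.cos (θ j)|) / d) := h4

lemma abs_phi_le_one (hd : 0 < d) (θ : Fin d → ℝ) : |phi d θ| ≤ 1 := by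
  have hd' : (0:ℝ) < d := by exact_mod_cast hd
  have h1 : |phi d θ| ≤ (∑ j, |Real.cos (θ j)|) / d := by
    rw [phi, abs_div, abs_of_nonneg hd'.le]
    gcongr
    exact Finset.abs_sum_le_sum_abs _ _
  have h2 : (∑ j, |Real.cos (θ j)|) ≤ ∑ _j : Fin d, (1:ℝ) :=
    Finset.sum_le_sum fun j _ => abs_cos_le_one _
  rw [Finset.sum_const, Finset.card_univ, Fintype.card_fin, nsmul_eq_mul, mul_one] at h2
  calc |phi d θ| ≤ (∑ j, |Real.cos (θ j)|) / d := h1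
    _ ≤ (d:ℝ) / d := by gcongr
    _ = 1 := div_self hd'.ne'

lemma abs_phi_pow_le (hd : 0 < d) (θ : Fin d → ℝ) (m : ℕ) :
    |phi d θ| ^ m ≤ ∏ j, Real.exp (-((m:ℝ) * (1 - |Real.cos (θ j)|)) / d) := by
  calc |phi d θ| ^ m ≤ (∏ j, Real.exp (-(1 - |Real.cos (θ j)|) / d)) ^ m :=
        pow_le_pow_left₀ (abs_nonneg _) (abs_phi_le hd θ) m
    _ = _ := by
        rw [← Finset.prod_pow]
        refine Finset.prod_congr rfl fun j _ => ?_
        rw [← Real.exp_nat_mul]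
        congr 1
        ring

lemma w_continuous (m : ℕ) :
    Continuous (fun t : ℝ => Real.exp (-((m:ℝ) * (1 - |Real.cos t|)) / d)) :=
  Real.continuous_exp.comp (((continuous_const.mul
    (continuous_const.sub (continuous_abs.comp Real.continuous_cos))).neg).div_const d)

lemma w_integrable (m : ℕ) :
    Integrable (fun t : ℝ => indr t * Real.exp (-((m:ℝ) * (1 - |Real.cos t|)) / d)) := by
  have h1 : (fun t : ℝ => indr t * Real.exp (-((m:ℝ) * (1 - |Real.cos t|)) / d))
      = (Set.Ioc (-π) π).indicator
          (fun t => Real.exp (-((m:ℝ) * (1 - |Real.cos t|)) / d)) := by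
    ext t
    by_cases h : t ∈ Set.Ioc (-π) π
    · simp [indr, Set.indicator_of_mem h]
    · simp [indr, Set.indicator_of_notMem h]
  rw [h1, integrable_indicator_iff measurableSet_Ioc]
  exact (w_continuous m).integrableOn_Ioc

lemma oneD_bound (hd : 0 < d) (m : ℕ) (hm : 1 ≤ m) :
    ∫ t : ℝ, indr t * Real.exp (-((m:ℝ) * (1 - |Real.cos t|)) / d)
      ≤ 3 * (Real.sqrt (d * π ^ 3 / 2) * Real.sqrt (1 / m)) := by
  have hπ : 0 < π := Real.pi_pos
  have hd' : (0:ℝ) < d := by exact_mod_cast hd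
  have hm' : (0:ℝ) < m := by exact_mod_cast hm
  set b : ℝ := 2 * m / (d * π ^ 2) with hbdef
  have hb : 0 < b := by rw [hbdef]; positivity
  have i0 : Integrable (fun t : ℝ => Real.exp (-b * t ^ 2)) := integrable_exp_neg_mul_sq hb
  have i1 : Integrable (fun t : ℝ => Real.exp (-b * (t - π) ^ 2)) := i0.comp_sub_right π
  have i2 : Integrable (fun t : ℝ => Real.exp (-b * (t + π) ^ 2)) := by
    have := i0.comp_sub_right (-π)
    simpa [sub_neg_eq_add] using this
  have hpt : ∀ t : ℝ, indr t * Real.exp (-((m:ℝ) * (1 - |Real.cos t|)) / d)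
      ≤ Real.exp (-b * t ^ 2) + Real.exp (-b * (t - π) ^ 2) + Real.exp (-b * (t + π) ^ 2) := by
    intro t
    by_cases ht : t ∈ Set.Ioc (-π) π
    · rw [indr, Set.indicator_of_mem ht, Pi.one_apply, one_mul]
      obtain ⟨u, hu, hkey⟩ := exists_center ht
      have h8 : ((m:ℝ)/d) * (2/π^2 * u^2) ≤ ((m:ℝ)/d) * (1 - |Real.cos t|) :=
        mul_le_mul_of_nonneg_left hkey (by positivity)
      have h9 : b * u^2 = ((m:ℝ)/d) * (2/π^2 * u^2) := by
        rw [hbdef]; field_simp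
      have h10 : ((m:ℝ)/d) * (1 - |Real.cos t|) = ((m:ℝ) * (1 - |Real.cos t|))/d := by ring
      have hbase : Real.exp (-((m:ℝ) * (1 - |Real.cos t|)) / d) ≤ Real.exp (-b * u^2) := by
        apply Real.exp_le_exp.mpr
        rw [neg_div, neg_mul]
        apply neg_le_neg
        linarith
      have e1 : (0:ℝ) < Real.exp (-b * t ^ 2) := Real.exp_pos _
      have e2 : (0:ℝ) < Real.exp (-b * (t - π) ^ 2) := Real.exp_pos _
      have e3 : (0:ℝ) < Real.exp (-b * (t + π) ^ 2) := Real.exp_pos _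
      rcases hu with rfl | rfl | rfl
      · linarith
      · linarith
      · linarith
    · rw [indr, Set.indicator_of_notMem ht, zero_mul]
      positivity
  have hint : ∫ t : ℝ, indr t * Real.exp (-((m:ℝ) * (1 - |Real.cos t|)) / d)
      ≤ ∫ t : ℝ, (Real.exp (-b * t ^ 2) + Real.exp (-b * (t - π) ^ 2)
          + Real.exp (-b * (t + π) ^ 2)) :=
    integral_mono (w_integrable m) ((i0.add i1).add i2) hpt
  have hshift1 : ∫ t : ℝ, Real.exp (-b * (t - π) ^ 2) = ∫ t : ℝ, Real.exp (-b * t ^ 2) :=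
    integral_sub_right_eq_self (μ := volume) (fun x => Real.exp (-b * x ^ 2)) π
  have hshift2 : ∫ t : ℝ, Real.exp (-b * (t + π) ^ 2) = ∫ t : ℝ, Real.exp (-b * t ^ 2) := by
    have := integral_sub_right_eq_self (μ := volume) (fun x => Real.exp (-b * x ^ 2)) (-π)
    simpa [sub_neg_eq_add] using this
  have hsum : ∫ t : ℝ, (Real.exp (-b * t ^ 2) + Real.exp (-b * (t - π) ^ 2)
      + Real.exp (-b * (t + π) ^ 2))
      = (∫ t : ℝ, Real.exp (-b * t ^ 2)) + (∫ t : ℝ, Real.exp (-b * (t - π) ^ 2))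
        + ∫ t : ℝ, Real.exp (-b * (t + π) ^ 2) := by
    have h := integral_add (i0.add i1) i2
    simp only [Pi.add_apply] at h
    rw [h, integral_add i0 i1]
  rw [hsum, hshift1, hshift2, integral_gaussian b] at hint
  have hval : π / b = (d * π ^ 3 / 2) * (1 / m) := by
    rw [hbdef]; field_simp
  have hsq : Real.sqrt (π / b) = Real.sqrt (d * π ^ 3 / 2) * Real.sqrt (1 / m) := by
    rw [hval, Real.sqrt_mul (by positivity)]
  calc ∫ t : ℝ, indr t * Real.exp (-((m:ℝ) * (1 - |Real.cos t|)) / d)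
      ≤ Real.sqrt (π / b) + Real.sqrt (π / b) + Real.sqrt (π / b) := hint
    _ = 3 * Real.sqrt (π / b) := by ring
    _ = 3 * (Real.sqrt (d * π ^ 3 / 2) * Real.sqrt (1 / m)) := by rw [hsq]

lemma phi_measurable : Measurable (phi d) := by
  apply Measurable.div_const
  exact Finset.measurable_sum _ fun j _ =>
    Real.continuous_cos.measurable.comp (measurable_pi_apply j)

lemma box_bound (hd : 0 < d) (m : ℕ) (hm : 1 ≤ m) :
    ∫ θ : Fin d → ℝ, (∏ j, indr (θ j)) * phi d θ ^ m
      ≤ (3 * (Real.sqrt (d * π ^ 3 / 2) * Real.sqrt (1 / m))) ^ d := by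
  have hLint : Integrable (fun θ : Fin d → ℝ => (∏ j, indr (θ j)) * phi d θ ^ m) := by
    refine Integrable.mono' integrable_prod_indr
      ((measurable_prod_indr.mul (phi_measurable.pow_const m)).aestronglyMeasurable) ?_
    refine Filter.Eventually.of_forall fun θ => ?_
    rw [Real.norm_eq_abs, abs_mul, abs_of_nonneg (prod_indr_nonneg θ), abs_pow]
    calc (∏ j, indr (θ j)) * |phi d θ| ^ m ≤ (∏ j, indr (θ j)) * 1 := by
          apply mul_le_mul_of_nonneg_left _ (prod_indr_nonneg θ)
          exact pow_le_one₀ (abs_nonneg _) (abs_phi_le_one hd θ)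
      _ = _ := mul_one _
  have hRint : Integrable (fun θ : Fin d → ℝ =>
      ∏ j, (indr (θ j) * Real.exp (-((m:ℝ) * (1 - |Real.cos (θ j)|)) / d))) :=
    Integrable.fintype_prod (𝕜 := ℝ) fun _ => w_integrable m
  have hpt : ∀ θ : Fin d → ℝ, (∏ j, indr (θ j)) * phi d θ ^ m
      ≤ ∏ j, (indr (θ j) * Real.exp (-((m:ℝ) * (1 - |Real.cos (θ j)|)) / d)) := by
    intro θ
    rw [Finset.prod_mul_distrib]
    calc (∏ j, indr (θ j)) * phi d θ ^ m ≤ (∏ j, indr (θ j)) * |phi d θ| ^ m := by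
          apply mul_le_mul_of_nonneg_left _ (prod_indr_nonneg θ)
          rw [← abs_pow]
          exact le_abs_self _
      _ ≤ (∏ j, indr (θ j)) * ∏ j, Real.exp (-((m:ℝ) * (1 - |Real.cos (θ j)|)) / d) :=
          mul_le_mul_of_nonneg_left (abs_phi_pow_le hd θ m) (prod_indr_nonneg θ)
  calc ∫ θ : Fin d → ℝ, (∏ j, indr (θ j)) * phi d θ ^ m
      ≤ ∫ θ : Fin d → ℝ, ∏ j, (indr (θ j) * Real.exp (-((m:ℝ) * (1 - |Real.cos (θ j)|)) / d)) :=
        integral_mono hLint hRint hpt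
    _ = (∫ t : ℝ, indr t * Real.exp (-((m:ℝ) * (1 - |Real.cos t|)) / d)) ^ d := by
        rw [integral_fintype_prod_volume_eq_pow (ι := Fin d)
          (fun t => indr t * Real.exp (-((m:ℝ) * (1 - |Real.cos t|)) / d)), Fintype.card_fin]
    _ ≤ (3 * (Real.sqrt (d * π ^ 3 / 2) * Real.sqrt (1 / m))) ^ d := by
        apply pow_le_pow_left₀ _ (oneD_bound hd m hm)
        apply integral_nonneg
        intro t
        exact mul_nonneg (indr_nonneg t) (Real.exp_nonneg _)

end Bound
end SRWAux

namespace SRWAux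
section Sum

lemma key_step {a : ℝ} (ha : 1 ≤ a) :
    (a+1) ^ (-(3:ℝ)/2) ≤ 2 * a ^ (-(1:ℝ)/2) - 2 * (a+1) ^ (-(1:ℝ)/2) := by
  have ha0 : (0:ℝ) ≤ a := by linarith
  have ha1 : (0:ℝ) ≤ a + 1 := by linarith
  set x := Real.sqrt a with hxdef
  set y := Real.sqrt (a+1) with hydef
  have hx : 0 < x := Real.sqrt_pos.mpr (by linarith)
  have hy : 0 < y := Real.sqrt_pos.mpr (by linarith)
  have hx2 : x^2 = a := Real.sq_sqrt ha0
  have hy2 : y^2 = a+1 := Real.sq_sqrt ha1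
  have hxy : x ≤ y := Real.sqrt_le_sqrt (by linarith)
  have hrx : a ^ (-(1:ℝ)/2) = x⁻¹ := by
    rw [show (-(1:ℝ)/2) = -(1/2) by ring, Real.rpow_neg ha0, ← Real.sqrt_eq_rpow]
  have hry : (a+1) ^ (-(1:ℝ)/2) = y⁻¹ := by
    rw [show (-(1:ℝ)/2) = -(1/2) by ring, Real.rpow_neg ha1, ← Real.sqrt_eq_rpow]
  have hry3 : (a+1) ^ (-(3:ℝ)/2) = (y^3)⁻¹ := by
    rw [show (-(3:ℝ)/2) = -((1/2)*(3:ℕ)) by norm_num, Real.rpow_neg ha1,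
      Real.rpow_mul ha1, Real.rpow_natCast, ← Real.sqrt_eq_rpow]
  rw [hrx, hry, hry3]
  have key2 : x + 2*x*y^2 ≤ 2*y^3 := by nlinarith [hx, hy, hxy, hx2, hy2]
  have e : 2*x⁻¹ - 2*y⁻¹ - (y^3)⁻¹ = (2*y^3 - 2*x*y^2 - x)/(x*y^3) := by
    field_simp
  have hpos : (0:ℝ) < x*y^3 := by positivity
  have hnum : (0:ℝ) ≤ 2*y^3 - 2*x*y^2 - x := by linarith
  have := div_nonneg hnum hpos.le
  linarith [e ▸ this]

lemma partial_sum_bound (d : ℕ) (hd5 : 5 ≤ d) {i : ℕ} (hi : 1 ≤ i) (n : ℕ) :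
    ∑ t ∈ Finset.range n, ((t+i:ℕ):ℝ) ^ (-(d:ℝ)/2) ≤ 3 * (i:ℝ) ^ ((2-(d:ℝ))/2) := by
  have hi' : (1:ℝ) ≤ (i:ℝ) := by exact_mod_cast hi
  have hipos : (0:ℝ) < (i:ℝ) := by linarith
  have hd' : (5:ℝ) ≤ (d:ℝ) := by exact_mod_cast hd5
  have step1 : ∀ t : ℕ, ((t+i:ℕ):ℝ) ^ (-(d:ℝ)/2)
      ≤ (i:ℝ) ^ ((3-(d:ℝ))/2) * ((t+i:ℕ):ℝ) ^ (-(3:ℝ)/2) := by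
    intro t
    have hbase : (i:ℝ) ≤ ((t+i:ℕ):ℝ) := by
      push_cast
      linarith [Nat.cast_nonneg (α := ℝ) t]
    have hbpos : (0:ℝ) < ((t+i:ℕ):ℝ) := lt_of_lt_of_le hipos hbase
    have hsplit : ((t+i:ℕ):ℝ) ^ (-(d:ℝ)/2)
        = ((t+i:ℕ):ℝ) ^ ((3-(d:ℝ))/2) * ((t+i:ℕ):ℝ) ^ (-(3:ℝ)/2) := by
      rw [← Real.rpow_add hbpos]
      congr 1
      ring
    rw [hsplit]
    apply mul_le_mul_of_nonneg_right _ (Real.rpow_nonneg hbpos.le _)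
    exact Real.rpow_le_rpow_of_nonpos hipos hbase (by linarith)
  have step2 : ∑ t ∈ Finset.range n, ((t+i:ℕ):ℝ) ^ (-(3:ℝ)/2)
      ≤ 3 * (i:ℝ) ^ (-(1:ℝ)/2) := by
    cases n with
    | zero =>
      simp only [Finset.range_zero, Finset.sum_empty]
      positivity
    | succ s =>
      rw [Finset.sum_range_succ']
      have h0 : ((0+i:ℕ):ℝ) ^ (-(3:ℝ)/2) ≤ (i:ℝ) ^ (-(1:ℝ)/2) := by
        rw [show (0+i:ℕ) = i by omega]
        exact Real.rpow_le_rpow_of_exponent_le hi' (by norm_num)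
      set g : ℕ → ℝ := fun t => 2 * ((t+i:ℕ):ℝ) ^ (-(1:ℝ)/2) with hgdef
      have ht : ∀ t : ℕ, ((t+1+i:ℕ):ℝ) ^ (-(3:ℝ)/2) ≤ g t - g (t+1) := by
        intro t
        have ha : (1:ℝ) ≤ ((t+i:ℕ):ℝ) := by
          push_cast
          linarith [Nat.cast_nonneg (α := ℝ) t]
        have hc1 : ((t+1+i:ℕ):ℝ) = ((t+i:ℕ):ℝ) + 1 := by push_cast; ring
        rw [hgdef]
        simp only
        rw [show (t+1+i:ℕ) = (t+i)+1 by omega] at hc1 ⊢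
        rw [hc1]
        exact key_step ha
      have htel : ∑ t ∈ Finset.range s, (g t - g (t+1)) = g 0 - g s :=
        Finset.sum_range_sub' g s
      have hsum1 : ∑ t ∈ Finset.range s, ((t+1+i:ℕ):ℝ) ^ (-(3:ℝ)/2)
          ≤ ∑ t ∈ Finset.range s, (g t - g (t+1)) :=
        Finset.sum_le_sum fun t _ => ht t
      have hg0 : g 0 = 2 * ((i:ℕ):ℝ) ^ (-(1:ℝ)/2) := by
        rw [hgdef]
        simp only
        rw [show (0+i:ℕ) = i by omega]
      have hgs : 0 ≤ g s := by
        rw [hgdef]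
        simp only
        positivity
      calc ∑ t ∈ Finset.range s, (((t+1)+i:ℕ):ℝ) ^ (-(3:ℝ)/2) + ((0+i:ℕ):ℝ) ^ (-(3:ℝ)/2)
          ≤ (g 0 - g s) + (i:ℝ) ^ (-(1:ℝ)/2) := by
            apply add_le_add _ h0
            calc ∑ t ∈ Finset.range s, (((t+1)+i:ℕ):ℝ) ^ (-(3:ℝ)/2)
                ≤ ∑ t ∈ Finset.range s, (g t - g (t+1)) := hsum1
              _ = g 0 - g s := htel
        _ ≤ 2 * (i:ℝ) ^ (-(1:ℝ)/2) + (i:ℝ) ^ (-(1:ℝ)/2) := by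
            rw [hg0]
            have : ((i:ℕ):ℝ) = (i:ℝ) := rfl
            rw [this]
            linarith
        _ = 3 * (i:ℝ) ^ (-(1:ℝ)/2) := by ring
  calc ∑ t ∈ Finset.range n, ((t+i:ℕ):ℝ) ^ (-(d:ℝ)/2)
      ≤ ∑ t ∈ Finset.range n, (i:ℝ) ^ ((3-(d:ℝ))/2) * ((t+i:ℕ):ℝ) ^ (-(3:ℝ)/2) :=
        Finset.sum_le_sum fun t _ => step1 t
    _ = (i:ℝ) ^ ((3-(d:ℝ))/2) * ∑ t ∈ Finset.range n, ((t+i:ℕ):ℝ) ^ (-(3:ℝ)/2) := by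
        rw [Finset.mul_sum]
    _ ≤ (i:ℝ) ^ ((3-(d:ℝ))/2) * (3 * (i:ℝ) ^ (-(1:ℝ)/2)) :=
        mul_le_mul_of_nonneg_left step2 (Real.rpow_nonneg hipos.le _)
    _ = 3 * ((i:ℝ) ^ ((3-(d:ℝ))/2) * (i:ℝ) ^ (-(1:ℝ)/2)) := by ring
    _ = 3 * (i:ℝ) ^ ((2-(d:ℝ))/2) := by
        rw [← Real.rpow_add hipos]
        congr 2
        ring

set_option maxHeartbeats 1000000 in
lemma summable_g (d : ℕ) (hd5 : 5 ≤ d) (i : ℕ) :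
    Summable (fun t : ℕ => ((t+i:ℕ):ℝ) ^ (-(d:ℝ)/2)) := by
  have hd' : (5:ℝ) ≤ (d:ℝ) := by exact_mod_cast hd5
  have h : Summable (fun n : ℕ => (n:ℝ) ^ (-(d:ℝ)/2)) :=
    Real.summable_nat_rpow.mpr (by linarith)
  exact (summable_nat_add_iff i).mpr h

lemma tsum_bound (d : ℕ) (hd5 : 5 ≤ d) {i : ℕ} (hi : 1 ≤ i) :
    ∑' t : ℕ, ((t+i:ℕ):ℝ) ^ (-(d:ℝ)/2) ≤ 3 * (i:ℝ) ^ ((2-(d:ℝ))/2) :=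
  Real.tsum_le_of_sum_range_le
    (fun t => Real.rpow_nonneg (Nat.cast_nonneg _) _)
    (partial_sum_bound d hd5 hi)

end Sum
end SRWAux

namespace SRWAux
section Final
open Real

lemma sqrt_inv_pow (m : ℕ) (d : ℕ) :
    (Real.sqrt (1/(m:ℝ))) ^ d = ((m:ℕ):ℝ) ^ (-(d:ℝ)/2) := by
  have hm0 : (0:ℝ) ≤ (m:ℝ) := Nat.cast_nonneg m
  have h1 : Real.sqrt (1/(m:ℝ)) = (m:ℝ) ^ (-(1:ℝ)/2) := by
    rw [show (-(1:ℝ)/2) = -(1/2) by ring, Real.rpow_neg hm0, ← Real.sqrt_eq_rpow,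
      one_div, Real.sqrt_inv]
  calc (Real.sqrt (1/(m:ℝ))) ^ d = ((m:ℝ) ^ (-(1:ℝ)/2)) ^ d := by rw [h1]
    _ = ((m:ℝ) ^ (-(1:ℝ)/2)) ^ ((d:ℕ):ℝ) := (Real.rpow_natCast _ d).symm
    _ = (m:ℝ) ^ ((-(1:ℝ)/2) * (d:ℝ)) := (Real.rpow_mul hm0 _ _).symm
    _ = (m:ℝ) ^ (-(d:ℝ)/2) := by congr 1; ring

end Final
end SRWAux


open SRWAux Real

/-- for independent simple random walks `X, X'` on `ℤ^d` (`d ≥ 5`) started at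
the origin, `P(X i ∈ X'[0,∞)) ≤ C · i^{(2-d)/2}` with `C` depending only on `d`. -/
theorem hit_range_prob_le (d : ℕ) (hd : 5 ≤ d) :
    ∃ C : ℝ, 0 < C ∧
      ∀ (Ω : Type) [MeasurableSpace Ω] (μ : Measure Ω) [IsProbabilityMeasure μ]
        (X X' : ℕ → Ω → (Fin d → ℤ)),
        IsSRW μ (by omega) X 0 → IsSRW μ (by omega) X' 0 →
        IndepFun (fun ω n => X n ω) (fun ω n => X' n ω) μ →
        ∀ i : ℕ, 1 ≤ i →
          (μ {ω | ∃ t : ℕ, X' t ω = X i ω}).toReal ≤ C * (i : ℝ) ^ (((2 : ℝ) - d) / 2) := by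
  classical
  have hd0 : 0 < d := by omega
  have hπ : 0 < π := Real.pi_pos
  have hsq : 0 < Real.sqrt (d * π ^ 3 / 2) := Real.sqrt_pos.mpr (by positivity)
  set Kd : ℝ := (3 * Real.sqrt ((d:ℝ) * π ^ 3 / 2)) ^ d / (2 * π) ^ d with hKd
  have hKd0 : 0 < Kd := by rw [hKd]; positivity
  refine ⟨3 * Kd, by positivity, ?_⟩
  intro Ω _ μ _ X X' hX hX' hindep i hi
  have h2pi : (0:ℝ) < (2*π)^d := by positivity
  -- per-t bound
  have key : ∀ t : ℕ, (μ {ω | X' t ω = X i ω}).toReal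
      ≤ Kd * ((t+i:ℕ):ℝ) ^ (-(d:ℝ)/2) := by
    intro t
    have hY : Measurable (fun ω => X' t ω - X i ω) :=
      (measurable_of_countable (fun p : (Fin d → ℤ) × (Fin d → ℤ) => p.1 - p.2)).comp
        ((hX'.1 t).prodMk (hX.1 i))
    have hinv := inversion (d := d) μ hY
    have hset : {ω | X' t ω - X i ω = 0} = {ω | X' t ω = X i ω} := by
      ext ω; simp [sub_eq_zero]
    rw [hset] at hinv
    have hcongr : ∫ θ : Fin d → ℝ,
        (∏ j, indr (θ j)) * ∫ ω, Real.cos (dotp θ (X' t ω - X i ω)) ∂μ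
        = ∫ θ : Fin d → ℝ, (∏ j, indr (θ j)) * phi d θ ^ (t+i) := by
      refine integral_congr_ae (Filter.Eventually.of_forall fun θ => ?_)
      show (∏ j, indr (θ j)) * (∫ ω, Real.cos (dotp θ (X' t ω - X i ω)) ∂μ)
          = (∏ j, indr (θ j)) * phi d θ ^ (t+i)
      rw [SRWAux2.charFun_pair hd0 hX hX' hindep t i θ]
    rw [hcongr] at hinv
    have hbox := box_bound hd0 (t+i) (by omega)
    have heq : (μ {ω | X' t ω = X i ω}).toReal
        = (∫ θ : Fin d → ℝ, (∏ j, indr (θ j)) * phi d θ ^ (t+i)) / (2*π)^d := by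
      rw [eq_div_iff h2pi.ne']
      linarith [hinv]
    rw [heq]
    have hrhs : ((3 * (Real.sqrt ((d:ℝ) * π ^ 3 / 2) * Real.sqrt (1/((t+i:ℕ):ℝ)))) ^ d) / (2*π)^d
        = Kd * ((t+i:ℕ):ℝ) ^ (-(d:ℝ)/2) := by
      rw [show (3 * (Real.sqrt ((d:ℝ) * π ^ 3 / 2) * Real.sqrt (1/((t+i:ℕ):ℝ))))
          = (3 * Real.sqrt ((d:ℝ) * π ^ 3 / 2)) * Real.sqrt (1/((t+i:ℕ):ℝ)) by ring,
        mul_pow, sqrt_inv_pow (t+i) d, hKd]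
      ring
    calc (∫ θ : Fin d → ℝ, (∏ j, indr (θ j)) * phi d θ ^ (t+i)) / (2*π)^d
        ≤ ((3 * (Real.sqrt ((d:ℝ) * π ^ 3 / 2) * Real.sqrt (1/((t+i:ℕ):ℝ)))) ^ d) / (2*π)^d := by
          gcongr
      _ = Kd * ((t+i:ℕ):ℝ) ^ (-(d:ℝ)/2) := hrhs
  -- sum over t
  set p : ℕ → ℝ := fun t => Kd * ((t+i:ℕ):ℝ) ^ (-(d:ℝ)/2) with hp
  have hpnn : ∀ t, 0 ≤ p t :=
    fun t => mul_nonneg hKd0.le (Real.rpow_nonneg (Nat.cast_nonneg _) _)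
  have hpsum : Summable p := (summable_g d hd i).mul_left Kd
  have hset2 : {ω | ∃ t : ℕ, X' t ω = X i ω} = ⋃ t : ℕ, {ω | X' t ω = X i ω} := by
    ext ω; simp [Set.mem_iUnion]
  have h1 : μ {ω | ∃ t : ℕ, X' t ω = X i ω} ≤ ∑' t, μ {ω | X' t ω = X i ω} := by
    rw [hset2]
    exact measure_iUnion_le _
  have h2 : ∑' t, μ {ω | X' t ω = X i ω} ≤ ∑' t, ENNReal.ofReal (p t) := by
    refine ENNReal.tsum_le_tsum fun t => ?_
    rw [← ENNReal.ofReal_toReal (measure_ne_top μ _)]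
    exact ENNReal.ofReal_le_ofReal (key t)
  have h3 : ∑' t, ENNReal.ofReal (p t) = ENNReal.ofReal (∑' t, p t) :=
    (ENNReal.ofReal_tsum_of_nonneg hpnn hpsum).symm
  have h4 : ∑' t, p t ≤ 3 * Kd * (i:ℝ) ^ ((2-(d:ℝ))/2) := by
    rw [hp, tsum_mul_left]
    calc Kd * ∑' t : ℕ, ((t+i:ℕ):ℝ) ^ (-(d:ℝ)/2)
        ≤ Kd * (3 * (i:ℝ) ^ ((2-(d:ℝ))/2)) :=
          mul_le_mul_of_nonneg_left (tsum_bound d hd hi) hKd0.le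
      _ = 3 * Kd * (i:ℝ) ^ ((2-(d:ℝ))/2) := by ring
  have h5 : μ {ω | ∃ t : ℕ, X' t ω = X i ω}
      ≤ ENNReal.ofReal (3 * Kd * (i:ℝ) ^ ((2-(d:ℝ))/2)) := by
    refine (h1.trans (h2.trans_eq h3)).trans (ENNReal.ofReal_le_ofReal h4)
  have h6 := ENNReal.toReal_le_of_le_ofReal
    (by positivity : (0:ℝ) ≤ 3 * Kd * (i:ℝ) ^ ((2-(d:ℝ))/2)) h5
  exact h6
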